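/- With the setup of the ψ_ω automorphisms: if ω₁ < ω₂, then the elements s_{ω₁} = x_{ω₁}ψ_{ω₁} and s_{ω₂} = x_{ω₂}ψ_{ω₂} of the semidirect product F ⋊ Ψ commute, where Ψ ⊆ Aut(F) is the subgroup generated by the ψ_ω. -/

import Mathlib

open scoped Classical

def sqRels (Ω : Type) : Set (FreeGroup Ω) := Set.range (fun ω : Ω => FreeGroup.of ω ^ 2)

/-- `FP Ω` is the free product of copies of `ℤ/2` indexed by `Ω`. -/
abbrev FP (Ω : Type) := PresentedGroup (sqRels Ω)

def xg {Ω : Type} (ω : Ω) : FP Ω := PresentedGroup.of ω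

/-- The automorphism `ψ_ω` is determined by `ψ_ω(x_γ) = x_ω x_γ x_ω` if `γ < ω`
and `ψ_ω(x_γ) = x_γ` otherwise. -/
def IsPsiAut {Ω : Type} [PartialOrder Ω] (ω : Ω) (ψ : MulAut (FP Ω)) : Prop :=
  ∀ γ : Ω, ψ (xg γ) = if γ < ω then xg ω * xg γ * xg ω else xg γ

/-- The semidirect product `F ⋊ Aut(F)` for the tautological action; the subgroup
`F ⋊ Ψ` sits inside it, and the elements `s_ω` and the commutation relations among
them are the same in both groups. -/
abbrev GP (Ω : Type) : Type :=
  SemidirectProduct (FP Ω) (MulAut (FP Ω)) (MonoidHom.id (MulAut (FP Ω)))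

/-- The element `s_ω = x_ω · ψ_ω` of the semidirect product. -/
def sElt {Ω : Type} (ω : Ω) (ψ : MulAut (FP Ω)) : GP Ω := ⟨xg ω, ψ⟩

lemma xg_sq_aux {Ω : Type} (ω : Ω) : xg ω * xg ω = 1 := by
  have : (QuotientGroup.mk (FreeGroup.of ω ^ 2) : FP Ω) = 1 := by
    rw [QuotientGroup.eq_one_iff]
    exact Subgroup.subset_normalClosure ⟨ω, rfl⟩
  simp only [xg, PresentedGroup.of, pow_two] at this ⊢
  exact this

lemma xg_sq' {Ω : Type} (ω : Ω) (t : FP Ω) : xg ω * (xg ω * t) = t := by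
  rw [← mul_assoc, xg_sq_aux, one_mul]

lemma xg_sq {Ω : Type} (ω : Ω) : xg ω * xg ω = 1 := xg_sq_aux ω

/-- If `ω₁ < ω₂`, then `s_{ω₁} = x_{ω₁}ψ_{ω₁}` and `s_{ω₂} = x_{ω₂}ψ_{ω₂}` commute
in the semidirect product. -/
theorem sElt_commute (Ω : Type) [PartialOrder Ω] [Fintype Ω] (ω₁ ω₂ : Ω) (h : ω₁ < ω₂)
    (ψ₁ ψ₂ : MulAut (FP Ω)) (h₁ : IsPsiAut ω₁ ψ₁) (h₂ : IsPsiAut ω₂ ψ₂) :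
    sElt ω₁ ψ₁ * sElt ω₂ ψ₂ = sElt ω₂ ψ₂ * sElt ω₁ ψ₁ := by
  have ψ₁x₂ : ψ₁ (xg ω₂) = xg ω₂ := by
    rw [h₁ ω₂, if_neg (fun hlt => absurd (hlt.trans h) (lt_irrefl _))]
  have hcomm : ψ₁ * ψ₂ = ψ₂ * ψ₁ := by
    have key : (ψ₁.toMonoidHom.comp ψ₂.toMonoidHom : FP Ω →* FP Ω)
        = ψ₂.toMonoidHom.comp ψ₁.toMonoidHom := by
      apply PresentedGroup.ext
      intro γ
      show ψ₁ (ψ₂ (xg γ)) = ψ₂ (ψ₁ (xg γ))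
      rw [h₁ γ, h₂ γ]
      by_cases hγ1 : γ < ω₁
      · have hγ2 : γ < ω₂ := hγ1.trans h
        rw [if_pos hγ1, if_pos hγ2, map_mul, map_mul, map_mul, map_mul,
          h₁ γ, h₂ γ, h₂ ω₁, if_pos hγ1, if_pos hγ2, if_pos h, ψ₁x₂]
        group
        simp only [mul_assoc, xg_sq', xg_sq, one_mul]
      · by_cases hγ2 : γ < ω₂
        · rw [if_neg hγ1, if_pos hγ2, map_mul, map_mul, h₂ γ, h₁ γ, if_neg hγ1, if_pos hγ2, ψ₁x₂]
        · rw [if_neg hγ1, if_neg hγ2, h₂ γ, h₁ γ, if_neg hγ1, if_neg hγ2]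
    exact MulEquiv.ext fun x => DFunLike.congr_fun key x
  ext
  · show xg ω₁ * ψ₁ (xg ω₂) = xg ω₂ * ψ₂ (xg ω₁)
    rw [ψ₁x₂, h₂ ω₁, if_pos h, ← mul_assoc, ← mul_assoc, xg_sq, one_mul]
  · exact DFunLike.congr_fun hcomm _
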